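/- Let a, b be two multiplicatively independent integers ≥ 2 and let τ > 0 with τ ≠ τ₀ := ((b−1) log a)/((a−1) log b). Then there exists d₀ < 1 such that for every δ > 0 there exist ε > 0 and K > 0 with: for all sufficiently large x, the number of positive integers n ≤ x satisfying |s_b(n) − τ s_a(n)| ≤ ε s_a(n) is at most K x^{d₀+δ}. -/

import Mathlib

open Finset Real Filter Topology
set_option maxHeartbeats 1000000

lemma sum_digits_pos {a : ℕ} (ha : 2 ≤ a) : ∀ {n : ℕ}, 0 < n → 0 < (Nat.digits a n).sum := by
  intro n
  induction n using Nat.strong_induction_on with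
  | _ n ih =>
    intro hn
    rw [Nat.digits_def' (by omega : 1 < a) hn, List.sum_cons]
    rcases Nat.eq_zero_or_pos (n % a) with h | h
    · have hd : a ∣ n := Nat.dvd_of_mod_eq_zero h
      have h2 : 0 < n / a := Nat.div_pos (Nat.le_of_dvd hn hd) (by omega)
      have h3 : n / a < n := Nat.div_lt_self hn (by omega)
      have := ih _ h3 h2
      omega
    · omega

lemma sum_digits_mul_add {a : ℕ} (ha : 2 ≤ a) (q r : ℕ) (hr : r < a) :
    (Nat.digits a (a * q + r)).sum = r + (Nat.digits a q).sum := by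
  rcases Nat.eq_zero_or_pos (a * q + r) with h | h
  · have hq : q = 0 := by nlinarith
    have hr0 : r = 0 := by omega
    simp [hq, hr0]
  · rw [Nat.digits_def' (by omega : 1 < a) h, List.sum_cons]
    have h1 : (a * q + r) % a = r := by
      rw [Nat.mul_add_mod, Nat.mod_eq_of_lt hr]
    have h2 : (a * q + r) / a = q := by
      rw [Nat.mul_add_div (by omega : 0 < a), Nat.div_eq_of_lt hr, add_zero]
    rw [h1, h2]

/-- Generating function of the digit sum. -/
lemma sum_pow_sum_digits {a : ℕ} (ha : 2 ≤ a) (t : ℝ) (L : ℕ) :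
    ∑ n ∈ range (a ^ L), t ^ (Nat.digits a n).sum = (∑ j ∈ range a, t ^ j) ^ L := by
  induction L with
  | zero => simp
  | succ L ih =>
    have hrhs : (∑ j ∈ range a, t ^ j) ^ (L + 1)
        = ∑ p ∈ range (a ^ L) ×ˢ range a, t ^ (Nat.digits a p.1).sum * t ^ p.2 := by
      rw [pow_succ, ← ih, Finset.sum_mul_sum]
      rw [Finset.sum_product]
    rw [hrhs, pow_succ]
    refine Finset.sum_nbij' (fun n => (n / a, n % a)) (fun p => a * p.1 + p.2)
      ?_ ?_ ?_ ?_ ?_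
    · intro n hn
      simp only [Finset.mem_product, Finset.mem_range] at hn ⊢
      exact ⟨(Nat.div_lt_iff_lt_mul (by omega : 0 < a)).2 hn, Nat.mod_lt _ (by omega)⟩
    · rintro ⟨q, r⟩ hp
      simp only [Finset.mem_product, Finset.mem_range] at hp ⊢
      calc a * q + r < a * q + a := by omega
        _ = a * (q + 1) := by ring
        _ ≤ a * a ^ L := Nat.mul_le_mul_left _ hp.1
        _ = a ^ L * a := by ring
    · intro n _
      exact Nat.div_add_mod n a
    · rintro ⟨q, r⟩ hp
      simp only [Finset.mem_product, Finset.mem_range] at hp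
      simp only [Nat.mul_add_mod, Nat.mul_add_div (by omega : 0 < a),
        Nat.mod_eq_of_lt hp.2, Nat.div_eq_of_lt hp.2, add_zero]
    · intro n _
      simp only
      have hds : (Nat.digits a n).sum = n % a + (Nat.digits a (n / a)).sum := by
        conv_lhs => rw [← Nat.div_add_mod n a]
        exact sum_digits_mul_add ha (n / a) (n % a) (Nat.mod_lt _ (by omega))
      rw [hds, pow_add, mul_comm]

lemma slope_neg_right {ψ : ℝ → ℝ} {d : ℝ} (hd : HasDerivAt ψ d 1) (hneg : d < 0) :
    ∃ t : ℝ, 1 < t ∧ ψ t < ψ 1 := by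
  have h := hasDerivAt_iff_tendsto_slope.1 hd
  have h2 : ∀ᶠ t in 𝓝[≠] (1:ℝ), slope ψ 1 t < 0 :=
    h.eventually (gt_mem_nhds hneg)
  have h3 : ∀ᶠ t in 𝓝[>] (1:ℝ), slope ψ 1 t < 0 :=
    h2.filter_mono (nhdsWithin_mono _ fun x hx => ne_of_gt hx)
  obtain ⟨t, ht1, ht2⟩ := (h3.and self_mem_nhdsWithin).exists
  refine ⟨t, ht2, ?_⟩
  rw [slope_def_field, div_neg_iff] at ht1
  rcases ht1 with ⟨_, h5⟩ | ⟨h4, _⟩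
  · linarith
  · linarith
  
lemma slope_pos_left {ψ : ℝ → ℝ} {d : ℝ} (hd : HasDerivAt ψ d 1) (hpos : 0 < d) :
    ∃ t : ℝ, 0 < t ∧ t < 1 ∧ ψ t < ψ 1 := by
  have h := hasDerivAt_iff_tendsto_slope.1 hd
  have h2 : ∀ᶠ t in 𝓝[≠] (1:ℝ), 0 < slope ψ 1 t :=
    h.eventually (lt_mem_nhds hpos)
  have h3 : ∀ᶠ t in 𝓝[<] (1:ℝ), 0 < slope ψ 1 t :=
    h2.filter_mono (nhdsWithin_mono _ fun x hx => ne_of_lt hx)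
  have h4 : ∀ᶠ t in 𝓝[<] (1:ℝ), t ∈ Set.Ioo (0:ℝ) 1 :=
    Ioo_mem_nhdsLT (by norm_num : (0:ℝ) < 1)
  obtain ⟨t, ht1, ht2⟩ := (h3.and h4).exists
  refine ⟨t, ht2.1, ht2.2, ?_⟩
  obtain ⟨ht0, htl⟩ := ht2
  rw [slope_def_field, lt_div_iff_of_neg (by linarith : t - 1 < 0)] at ht1
  linarith
noncomputable def psiF (a : ℕ) (c : ℝ) (t : ℝ) : ℝ :=
  Real.log (∑ j ∈ Finset.range a, t ^ j) - c * Real.log t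

lemma psiF_one (a : ℕ) (ha : 2 ≤ a) (c : ℝ) : psiF a c 1 = Real.log a := by
  simp [psiF]

lemma psiF_hasDerivAt (a : ℕ) (ha : 2 ≤ a) (c : ℝ) :
    HasDerivAt (psiF a c) (((a : ℝ) - 1) / 2 - c) 1 := by
  have hg : HasDerivAt (fun t : ℝ => ∑ j ∈ Finset.range a, t ^ j)
      (∑ j ∈ Finset.range a, (j : ℝ) * 1 ^ (j - 1)) 1 :=
    HasDerivAt.fun_sum fun j _ => hasDerivAt_pow j 1
  have hsum : (∑ j ∈ Finset.range a, (j : ℝ) * 1 ^ (j - 1)) = (a : ℝ) * ((a : ℝ) - 1) / 2 := by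
    simp only [one_pow, mul_one]
    have h1 : 1 ≤ a := by omega
    have hgauss := Finset.sum_range_id_mul_two a
    have h2 : ((∑ i ∈ Finset.range a, i : ℕ) : ℝ) * 2 = (a : ℝ) * ((a : ℝ) - 1) := by
      calc ((∑ i ∈ Finset.range a, i : ℕ) : ℝ) * 2
          = (((∑ i ∈ Finset.range a, i) * 2 : ℕ) : ℝ) := by push_cast; ring
        _ = ((a * (a - 1) : ℕ) : ℝ) := by rw [hgauss]
        _ = (a : ℝ) * ((a : ℝ) - 1) := by push_cast [Nat.cast_sub h1]; ring
    have h3 : (∑ j ∈ Finset.range a, (j : ℝ)) = ((∑ i ∈ Finset.range a, i : ℕ) : ℝ) := by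
      push_cast; rfl
    rw [h3]; linarith
  rw [hsum] at hg
  have hg1 : (∑ j ∈ Finset.range a, (1:ℝ) ^ j) = (a : ℝ) := by simp
  have hlog : HasDerivAt (fun t : ℝ => Real.log (∑ j ∈ Finset.range a, t ^ j))
      (((a : ℝ) * ((a : ℝ) - 1) / 2) / (a : ℝ)) 1 := by
    have := hg.log (by rw [hg1]; positivity)
    rwa [hg1] at this
  have hlog2 : HasDerivAt (fun t : ℝ => c * Real.log t) (c * 1⁻¹) 1 :=
    (Real.hasDerivAt_log one_ne_zero).const_mul c
  have h := hlog.sub hlog2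
  have ha0 : (a : ℝ) ≠ 0 := by positivity
  have : (((a : ℝ) * ((a : ℝ) - 1) / 2) / (a : ℝ)) - c * 1⁻¹ = ((a : ℝ) - 1) / 2 - c := by
    field_simp
  rw [this] at h
  exact h

lemma exists_t_gt_one (a : ℕ) (ha : 2 ≤ a) (c : ℝ) (hc : ((a : ℝ) - 1) / 2 < c) :
    ∃ t : ℝ, 1 < t ∧ psiF a c t < Real.log a := by
  obtain ⟨t, ht, hlt⟩ := slope_neg_right (psiF_hasDerivAt a ha c) (by linarith)
  exact ⟨t, ht, by rwa [psiF_one a ha] at hlt⟩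

lemma exists_t_lt_one (a : ℕ) (ha : 2 ≤ a) (c : ℝ) (hc : c < ((a : ℝ) - 1) / 2) :
    ∃ t : ℝ, 0 < t ∧ t < 1 ∧ psiF a c t < Real.log a := by
  obtain ⟨t, ht0, ht1, hlt⟩ := slope_pos_left (psiF_hasDerivAt a ha c) (by linarith)
  exact ⟨t, ht0, ht1, by rwa [psiF_one a ha] at hlt⟩
lemma tail_count (a : ℕ) (ha : 2 ≤ a) (c t : ℝ) (ht0 : 0 < t)
    (cond : ℝ → ℕ → Prop)
    (hmono : ∀ x : ℝ, 2 ≤ x → ∀ n : ℕ, cond x n →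
      t ^ (c * (Real.log x / Real.log a)) ≤ t ^ (((Nat.digits a n).sum : ℕ) : ℝ))
    (hψ : psiF a c t < Real.log a) :
    ∃ d < (1:ℝ), ∃ C > (0:ℝ), ∀ x : ℝ, 2 ≤ x →
      ({n : ℕ | (n : ℝ) ≤ x ∧ cond x n}.ncard : ℝ) ≤ C * x ^ d := by
  classical
  have hla : 0 < Real.log a := Real.log_pos (by exact_mod_cast by omega : (1:ℝ) < a)
  set g : ℝ := ∑ j ∈ Finset.range a, t ^ j with hgdef
  have hg1 : 1 ≤ g := by
    have h0 : (0:ℕ) ∈ Finset.range a := Finset.mem_range.2 (by omega)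
    calc (1:ℝ) = t ^ (0:ℕ) := by simp
      _ ≤ g := Finset.single_le_sum (fun j _ => by positivity) h0
  have hg0 : 0 < g := by linarith
  refine ⟨psiF a c t / Real.log a, (div_lt_one hla).2 hψ, g, hg0, ?_⟩
  intro x hx
  set d := psiF a c t / Real.log a with hddef
  have hx0 : (0:ℝ) < x := by linarith
  have hx1 : (1:ℝ) < x := by linarith
  set ℓ : ℝ := Real.log x / Real.log a with hldef
  have hl0 : 0 ≤ ℓ := div_nonneg (Real.log_nonneg (by linarith)) hla.le
  set L : ℕ := ⌊ℓ⌋₊ + 1 with hLdef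
  have hLl : (L : ℝ) ≤ ℓ + 1 := by
    have := Nat.floor_le hl0
    push_cast [hLdef]
    linarith
  have hxL : x < ((a ^ L : ℕ) : ℝ) := by
    have h1 : x = Real.exp (ℓ * Real.log a) := by
      rw [hldef, div_mul_cancel₀ _ hla.ne', Real.exp_log hx0]
    have h2 : ((a ^ L : ℕ) : ℝ) = Real.exp ((L : ℝ) * Real.log a) := by
      rw [Nat.cast_pow, ← Real.rpow_natCast (a : ℝ) L,
        Real.rpow_def_of_pos (by positivity : (0:ℝ) < (a:ℝ)), mul_comm]
    rw [h1, h2]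
    apply Real.exp_lt_exp.2
    have hlL : ℓ < (L : ℝ) := by
      have := Nat.lt_floor_add_one ℓ
      rw [hLdef]; push_cast; linarith
    exact mul_lt_mul_of_pos_right hlL hla
  set F : Finset ℕ := (Finset.range (a ^ L)).filter (fun n => cond x n) with hFdef
  have hsubset : {n : ℕ | (n : ℝ) ≤ x ∧ cond x n} ⊆ ↑F := by
    intro n hn
    simp only [Set.mem_setOf_eq] at hn
    simp only [hFdef, Finset.coe_filter, Set.mem_setOf_eq, Finset.mem_range]
    refine ⟨?_, hn.2⟩
    have : (n : ℝ) < ((a ^ L : ℕ) : ℝ) := lt_of_le_of_lt hn.1 hxL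
    exact_mod_cast this
  have hcard : ({n : ℕ | (n : ℝ) ≤ x ∧ cond x n}.ncard : ℝ) ≤ (F.card : ℝ) := by
    have := Set.ncard_le_ncard hsubset F.finite_toSet
    rw [Set.ncard_coe_finset] at this
    exact_mod_cast this
  -- Chernoff
  have hchern : (F.card : ℝ) * t ^ (c * ℓ) ≤ g ^ L := by
    calc (F.card : ℝ) * t ^ (c * ℓ) = F.card • (t ^ (c * ℓ)) := by rw [nsmul_eq_mul]
      _ ≤ ∑ n ∈ F, t ^ (((Nat.digits a n).sum : ℕ) : ℝ) := by
          apply Finset.card_nsmul_le_sum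
          intro n hn
          exact hmono x hx n (Finset.mem_filter.1 hn).2
      _ = ∑ n ∈ F, t ^ ((Nat.digits a n).sum) := by
          apply Finset.sum_congr rfl
          intro n _
          rw [Real.rpow_natCast]
      _ ≤ ∑ n ∈ Finset.range (a ^ L), t ^ ((Nat.digits a n).sum) := by
          apply Finset.sum_le_sum_of_subset_of_nonneg (Finset.filter_subset _ _)
          intro n _ _
          positivity
      _ = g ^ L := sum_pow_sum_digits ha t L
  have htp : (0:ℝ) < t ^ (c * ℓ) := Real.rpow_pos_of_pos ht0 _
  have h1 : (F.card : ℝ) ≤ g ^ L / t ^ (c * ℓ) := by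
    rw [le_div_iff₀ htp]
    exact hchern
  have h2 : (g : ℝ) ^ L ≤ g ^ (ℓ + 1) := by
    rw [← Real.rpow_natCast g L]
    exact Real.rpow_le_rpow_of_exponent_le hg1 hLl
  have h3 : g ^ (ℓ + 1) / t ^ (c * ℓ) = g * x ^ d := by
    rw [Real.rpow_def_of_pos hg0, Real.rpow_def_of_pos ht0, Real.rpow_def_of_pos hx0,
      ← Real.exp_sub]
    have hexp : Real.log g * (ℓ + 1) - Real.log t * (c * ℓ)
        = Real.log g + ℓ * psiF a c t := by
      rw [psiF, ← hgdef]; ring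
    have hld : ℓ * psiF a c t = Real.log x * d := by
      rw [hddef, hldef]
      field_simp
      try ring
    rw [hexp, hld, Real.exp_add, Real.exp_log hg0]
  calc ({n : ℕ | (n : ℝ) ≤ x ∧ cond x n}.ncard : ℝ)
      ≤ (F.card : ℝ) := hcard
    _ ≤ g ^ L / t ^ (c * ℓ) := h1
    _ ≤ g ^ (ℓ + 1) / t ^ (c * ℓ) := by gcongr
    _ = g * x ^ d := h3

lemma assemble (a b : ℕ) (τ ε : ℝ) (hε : 0 < ε)
    (conda condb : ℝ → ℕ → Prop)
    (d1 d2 C1 C2 : ℝ) (hd1 : d1 < 1) (hd2 : d2 < 1) (hC1 : 0 < C1) (hC2 : 0 < C2)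
    (hb1 : ∀ x : ℝ, 2 ≤ x → ({n : ℕ | (n:ℝ) ≤ x ∧ conda x n}.ncard : ℝ) ≤ C1 * x ^ d1)
    (hb2 : ∀ x : ℝ, 2 ≤ x → ({n : ℕ | (n:ℝ) ≤ x ∧ condb x n}.ncard : ℝ) ≤ C2 * x ^ d2)
    (hincl : ∀ x : ℝ, 2 ≤ x → ∀ n : ℕ, 0 < n → (n:ℝ) ≤ x →
      |((Nat.digits b n).sum : ℝ) - τ * ((Nat.digits a n).sum : ℝ)|
        ≤ ε * ((Nat.digits a n).sum : ℝ) →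
      conda x n ∨ condb x n) :
    ∃ d₀ < (1 : ℝ), ∀ δ > (0 : ℝ), ∃ ε > (0 : ℝ), ∃ K > (0 : ℝ), ∃ x₀ : ℝ, ∀ x ≥ x₀,
      (({n : ℕ | 0 < n ∧ (n : ℝ) ≤ x ∧
          |((Nat.digits b n).sum : ℝ) - τ * ((Nat.digits a n).sum : ℝ)|
            ≤ ε * ((Nat.digits a n).sum : ℝ)}.ncard : ℝ))
        ≤ K * x ^ (d₀ + δ) := by
  refine ⟨max d1 d2, max_lt hd1 hd2, ?_⟩
  intro δ hδ
  refine ⟨ε, hε, C1 + C2, by linarith, 2, ?_⟩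
  intro x hx
  have hx1 : (1:ℝ) ≤ x := by linarith
  have hx0 : (0:ℝ) < x := by linarith
  have hfin : ∀ P : ℕ → Prop, {n : ℕ | (n:ℝ) ≤ x ∧ P n}.Finite := by
    intro P
    apply (Set.finite_Iic ⌊x⌋₊).subset
    intro n hn
    exact Set.mem_Iic.2 (Nat.le_floor hn.1)
  set S1 := {n : ℕ | (n:ℝ) ≤ x ∧ conda x n} with hS1
  set S2 := {n : ℕ | (n:ℝ) ≤ x ∧ condb x n} with hS2
  have hsub : {n : ℕ | 0 < n ∧ (n : ℝ) ≤ x ∧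
      |((Nat.digits b n).sum : ℝ) - τ * ((Nat.digits a n).sum : ℝ)|
        ≤ ε * ((Nat.digits a n).sum : ℝ)} ⊆ S1 ∪ S2 := by
    rintro n ⟨h1, h2, h3⟩
    rcases hincl x hx n h1 h2 h3 with h | h
    · exact Or.inl ⟨h2, h⟩
    · exact Or.inr ⟨h2, h⟩
  have hcard : ({n : ℕ | 0 < n ∧ (n : ℝ) ≤ x ∧
      |((Nat.digits b n).sum : ℝ) - τ * ((Nat.digits a n).sum : ℝ)|
        ≤ ε * ((Nat.digits a n).sum : ℝ)}.ncard : ℝ)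
      ≤ (S1.ncard : ℝ) + (S2.ncard : ℝ) := by
    have h1 := Set.ncard_le_ncard hsub (((hfin _).union (hfin _)))
    have h2 := Set.ncard_union_le S1 S2
    have := le_trans h1 h2
    exact_mod_cast this
  have hd1' : x ^ d1 ≤ x ^ (max d1 d2 + δ) :=
    Real.rpow_le_rpow_of_exponent_le hx1 (by linarith [le_max_left d1 d2])
  have hd2' : x ^ d2 ≤ x ^ (max d1 d2 + δ) :=
    Real.rpow_le_rpow_of_exponent_le hx1 (by linarith [le_max_right d1 d2])
  calc _ ≤ (S1.ncard : ℝ) + (S2.ncard : ℝ) := hcard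
    _ ≤ C1 * x ^ d1 + C2 * x ^ d2 := add_le_add (hb1 x hx) (hb2 x hx)
    _ ≤ C1 * x ^ (max d1 d2 + δ) + C2 * x ^ (max d1 d2 + δ) := by
        apply add_le_add
        · exact mul_le_mul_of_nonneg_left hd1' hC1.le
        · exact mul_le_mul_of_nonneg_left hd2' hC2.le
    _ = (C1 + C2) * x ^ (max d1 d2 + δ) := by ring


/-- upper bound part of Theorem 1.1: for `τ ≠ τ₀` there is `d₀ < 1` such that
the number of `n ≤ x` with `|s_b(n) - τ s_a(n)| ≤ ε s_a(n)` is `≤ K x^{d₀+δ}`. -/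
theorem upper_bound_count_digit_sum_relation
    (a b : ℕ) (ha : 2 ≤ a) (hb : 2 ≤ b)
    (hmi : ∀ m n : ℕ, a ^ m = b ^ n → m = 0 ∧ n = 0)
    (τ : ℝ) (hτ : 0 < τ)
    (hτne : τ ≠ ((b : ℝ) - 1) * Real.log a / (((a : ℝ) - 1) * Real.log b)) :
    ∃ d₀ < (1 : ℝ), ∀ δ > (0 : ℝ), ∃ ε > (0 : ℝ), ∃ K > (0 : ℝ), ∃ x₀ : ℝ, ∀ x ≥ x₀,
      (({n : ℕ | 0 < n ∧ (n : ℝ) ≤ x ∧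
          |((Nat.digits b n).sum : ℝ) - τ * ((Nat.digits a n).sum : ℝ)|
            ≤ ε * ((Nat.digits a n).sum : ℝ)}.ncard : ℝ))
        ≤ K * x ^ (d₀ + δ) := by
  have ha1 : (1:ℝ) < (a:ℝ) := by exact_mod_cast (by omega : 1 < a)
  have hb1 : (1:ℝ) < (b:ℝ) := by exact_mod_cast (by omega : 1 < b)
  have hla : 0 < Real.log a := Real.log_pos ha1
  have hlb : 0 < Real.log b := Real.log_pos hb1
  obtain ⟨ma, hmadef, hma⟩ : ∃ ma : ℝ, ma = ((a:ℝ) - 1) / 2 ∧ 0 < ma :=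
    ⟨_, rfl, by linarith⟩
  obtain ⟨mb, hmbdef, hmb⟩ : ∃ mb : ℝ, mb = ((b:ℝ) - 1) / 2 ∧ 0 < mb :=
    ⟨_, rfl, by linarith⟩
  obtain ⟨τ₀, hτ₀def, hτ₀⟩ :
      ∃ τ₀ : ℝ, τ₀ = ((b : ℝ) - 1) * Real.log a / (((a : ℝ) - 1) * Real.log b) ∧ 0 < τ₀ :=
    ⟨_, rfl, div_pos (by nlinarith) (by nlinarith)⟩
  rw [← hτ₀def] at hτne
  have hrel : ∀ x : ℝ, mb * (Real.log x / Real.log b)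
      = τ₀ * (ma * (Real.log x / Real.log a)) := by
    intro x
    have hane : (a:ℝ) - 1 ≠ 0 := by linarith
    have hbne : (b:ℝ) - 1 ≠ 0 := by linarith
    rw [hτ₀def, hmadef, hmbdef]
    field_simp
  rcases hτne.lt_or_gt with hlt | hgt
  · -- τ < τ₀ : upper tail in base a, lower tail in base b
    obtain ⟨ε, γ, hε, hγ0, hkey⟩ :
        ∃ ε γ : ℝ, 0 < ε ∧ 0 < γ ∧ (τ + ε) * (1 + γ) < (1 - γ) * τ₀ := by
      refine ⟨(τ₀ - τ)/4, min (1/2) ((τ₀ - τ)/(8*τ₀)), by linarith,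
        lt_min (by norm_num) (div_pos (by linarith) (by positivity)), ?_⟩
      have h1 : min (1/2) ((τ₀ - τ)/(8*τ₀)) ≤ (τ₀ - τ)/(8*τ₀) := min_le_right _ _
      have h0 : 0 < min (1/2) ((τ₀ - τ)/(8*τ₀)) :=
        lt_min (by norm_num) (div_pos (by linarith) (by positivity))
      have e1 : min (1/2) ((τ₀ - τ)/(8*τ₀)) * (8*τ₀) ≤ τ₀ - τ :=
        (le_div_iff₀ (by positivity)).1 h1
      nlinarith [h0, hτ₀, hτ]
    have hca : ((a:ℝ) - 1) / 2 < (1 + γ) * ma := by rw [hmadef] at *; nlinarith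
    have hcb : (1 - γ) * mb < ((b:ℝ) - 1) / 2 := by rw [hmbdef] at *; nlinarith
    obtain ⟨t1, ht1, hψ1⟩ := exists_t_gt_one a ha ((1 + γ) * ma) hca
    obtain ⟨d1, hd1, C1, hC1, hbound1⟩ := tail_count a ha ((1 + γ) * ma) t1 (by linarith)
      (fun x n => (1 + γ) * ma * (Real.log x / Real.log a) ≤ ((Nat.digits a n).sum : ℝ))
      (fun x _ n h => Real.rpow_le_rpow_of_exponent_le ht1.le h) hψ1
    obtain ⟨t2, ht20, ht21, hψ2⟩ := exists_t_lt_one b hb ((1 - γ) * mb) hcb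
    obtain ⟨d2, hd2, C2, hC2, hbound2⟩ := tail_count b hb ((1 - γ) * mb) t2 ht20
      (fun x n => ((Nat.digits b n).sum : ℝ) ≤ (1 - γ) * mb * (Real.log x / Real.log b))
      (fun x _ n h => Real.rpow_le_rpow_of_exponent_ge ht20 ht21.le h) hψ2
    apply assemble a b τ ε hε
      (fun x n => (1 + γ) * ma * (Real.log x / Real.log a) ≤ ((Nat.digits a n).sum : ℝ))
      (fun x n => ((Nat.digits b n).sum : ℝ) ≤ (1 - γ) * mb * (Real.log x / Real.log b))
      d1 d2 C1 C2 hd1 hd2 hC1 hC2 hbound1 hbound2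
    intro x hx n hn hnx habs
    by_contra hcon
    push_neg at hcon
    obtain ⟨h1, h2⟩ := hcon
    have hub : ((Nat.digits b n).sum : ℝ) - τ * ((Nat.digits a n).sum : ℝ)
        ≤ ε * ((Nat.digits a n).sum : ℝ) := (abs_le.1 habs).2
    have hτε : 0 < τ + ε := by linarith
    have hM : 0 < ma * (Real.log x / Real.log a) :=
      mul_pos hma (div_pos (Real.log_pos (by linarith)) hla)
    have hchain : (1 - γ) * mb * (Real.log x / Real.log b)
        < (τ + ε) * ((1 + γ) * ma * (Real.log x / Real.log a)) := by
      calc (1 - γ) * mb * (Real.log x / Real.log b)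
          < ((Nat.digits b n).sum : ℝ) := h2
        _ ≤ (τ + ε) * ((Nat.digits a n).sum : ℝ) := by linarith
        _ < (τ + ε) * ((1 + γ) * ma * (Real.log x / Real.log a)) :=
            mul_lt_mul_of_pos_left h1 hτε
    have hrw : (1 - γ) * mb * (Real.log x / Real.log b)
        = (1 - γ) * (τ₀ * (ma * (Real.log x / Real.log a))) := by
      rw [mul_assoc, hrel x]
    rw [hrw] at hchain
    have hint := mul_lt_mul_of_pos_right hkey hM
    linarith
  · -- τ₀ < τ : lower tail in base a, upper tail in base b
    obtain ⟨ε, γ, hε, hγ0, hτmε, hkey⟩ :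
        ∃ ε γ : ℝ, 0 < ε ∧ 0 < γ ∧ 0 < τ - ε ∧ (1 + γ) * τ₀ < (τ - ε) * (1 - γ) := by
      refine ⟨(τ - τ₀)/4, min (1/2) ((τ - τ₀)/(4*(τ₀ + τ))), by linarith,
        lt_min (by norm_num) (div_pos (by linarith) (by positivity)), by linarith, ?_⟩
      have h1 : min (1/2) ((τ - τ₀)/(4*(τ₀ + τ))) ≤ (τ - τ₀)/(4*(τ₀ + τ)) := min_le_right _ _
      have h0 : 0 < min (1/2) ((τ - τ₀)/(4*(τ₀ + τ))) :=
        lt_min (by norm_num) (div_pos (by linarith) (by positivity))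
      have e1 : min (1/2) ((τ - τ₀)/(4*(τ₀ + τ))) * (4*(τ₀ + τ)) ≤ τ - τ₀ :=
        (le_div_iff₀ (by positivity)).1 h1
      nlinarith [h0, hτ₀, hτ]
    have hca : (1 - γ) * ma < ((a:ℝ) - 1) / 2 := by rw [hmadef] at *; nlinarith
    have hcb : ((b:ℝ) - 1) / 2 < (1 + γ) * mb := by rw [hmbdef] at *; nlinarith
    obtain ⟨t1, ht10, ht11, hψ1⟩ := exists_t_lt_one a ha ((1 - γ) * ma) hca
    obtain ⟨d1, hd1, C1, hC1, hbound1⟩ := tail_count a ha ((1 - γ) * ma) t1 ht10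
      (fun x n => ((Nat.digits a n).sum : ℝ) ≤ (1 - γ) * ma * (Real.log x / Real.log a))
      (fun x _ n h => Real.rpow_le_rpow_of_exponent_ge ht10 ht11.le h) hψ1
    obtain ⟨t2, ht2, hψ2⟩ := exists_t_gt_one b hb ((1 + γ) * mb) hcb
    obtain ⟨d2, hd2, C2, hC2, hbound2⟩ := tail_count b hb ((1 + γ) * mb) t2 (by linarith)
      (fun x n => (1 + γ) * mb * (Real.log x / Real.log b) ≤ ((Nat.digits b n).sum : ℝ))
      (fun x _ n h => Real.rpow_le_rpow_of_exponent_le ht2.le h) hψ2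
    apply assemble a b τ ε hε
      (fun x n => ((Nat.digits a n).sum : ℝ) ≤ (1 - γ) * ma * (Real.log x / Real.log a))
      (fun x n => (1 + γ) * mb * (Real.log x / Real.log b) ≤ ((Nat.digits b n).sum : ℝ))
      d1 d2 C1 C2 hd1 hd2 hC1 hC2 hbound1 hbound2
    intro x hx n hn hnx habs
    by_contra hcon
    push_neg at hcon
    obtain ⟨h1, h2⟩ := hcon
    have hlow : -(ε * ((Nat.digits a n).sum : ℝ))
        ≤ ((Nat.digits b n).sum : ℝ) - τ * ((Nat.digits a n).sum : ℝ) := (abs_le.1 habs).1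
    have hM : 0 < ma * (Real.log x / Real.log a) :=
      mul_pos hma (div_pos (Real.log_pos (by linarith)) hla)
    have hchain : (τ - ε) * ((1 - γ) * ma * (Real.log x / Real.log a))
        < (1 + γ) * mb * (Real.log x / Real.log b) := by
      calc (τ - ε) * ((1 - γ) * ma * (Real.log x / Real.log a))
          < (τ - ε) * ((Nat.digits a n).sum : ℝ) := mul_lt_mul_of_pos_left h1 hτmε
        _ ≤ ((Nat.digits b n).sum : ℝ) := by linarith
        _ < (1 + γ) * mb * (Real.log x / Real.log b) := h2
    have hrw : (1 + γ) * mb * (Real.log x / Real.log b)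
        = (1 + γ) * (τ₀ * (ma * (Real.log x / Real.log a))) := by
      rw [mul_assoc, hrel x]
    rw [hrw] at hchain
    have hint := mul_lt_mul_of_pos_right hkey hM
    linarith
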